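/- The function v(s,r) = -i/(2√2(s+r)) solves, for all s > 0 and r ≥ 1, the integral equation v(s,r) = -i/(2√2(s+1)) - ∫_1^r ∫_s^∞ v(s',r') / ((s+r')(s'+r')) ds' dr'. -/

import Mathlib

open MeasureTheory

lemma inner_real_aux (s c : ℝ) (h : 0 < s + c) :
    ∫ x in Set.Ioi s, ((x + c) ^ 2)⁻¹ = (s + c)⁻¹ := by
  have hderiv : ∀ x ∈ Set.Ici s, HasDerivAt (fun y => -(y + c)⁻¹) (((x + c) ^ 2)⁻¹) x := by
    intro x hx
    have hxc : x + c ≠ 0 := by have : s ≤ x := hx; nlinarith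
    have := (((hasDerivAt_id x).add_const c).inv hxc).neg
    convert this using 1
    · rfl
    · rfl
    · funext y; simp
    · simp [neg_div, one_div]
  have hlim : Filter.Tendsto (fun y : ℝ => -(y + c)⁻¹) Filter.atTop (nhds 0) := by
    rw [show (0:ℝ) = -0 by ring]
    exact ((tendsto_inv_atTop_zero.comp
      (Filter.tendsto_atTop_add_const_right _ c Filter.tendsto_id)).neg)
  rw [MeasureTheory.integral_Ioi_of_hasDerivAt_of_nonneg' hderiv (fun x hx => by positivity) hlim]
  simp

lemma outer_real_aux (s r : ℝ) (hs : 0 < s) (hr : 1 ≤ r) :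
    ∫ x in Set.Ioc (1:ℝ) r, ((s + x) ^ 2)⁻¹ = (s + 1)⁻¹ - (s + r)⁻¹ := by
  rw [← intervalIntegral.integral_of_le hr]
  have hderiv : ∀ x ∈ Set.uIcc (1:ℝ) r, HasDerivAt (fun y => -(s + y)⁻¹) (((s + x) ^ 2)⁻¹) x := by
    intro x hx
    rw [Set.uIcc_of_le hr] at hx
    have hxc : s + x ≠ 0 := by nlinarith [hx.1]
    have := (((hasDerivAt_id x).const_add s).inv hxc).neg
    convert this using 1
    · rfl
    · rfl
    · funext y; simp
    · simp [neg_div, one_div]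
  have hcont : ContinuousOn (fun x => ((s + x) ^ 2)⁻¹) (Set.uIcc (1:ℝ) r) := by
    apply ContinuousOn.inv₀ (by fun_prop)
    intro x hx
    rw [Set.uIcc_of_le hr] at hx
    have := hx.1
    positivity
  rw [intervalIntegral.integral_eq_sub_of_hasDerivAt hderiv
    (hcont.intervalIntegrable)]
  ring

lemma div_aux (a b z w : ℂ) : a / (b * z) / (w * z) = a / b * w⁻¹ * ((z ^ 2)⁻¹) := by
  simp only [div_eq_mul_inv, mul_inv, sq]
  ring

/-- `v(s,r) = -i/(2√2(s+r))` solves the integral equation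
`v(s,r) = -i/(2√2(s+1)) - ∫_1^r ∫_s^∞ v(s',r')/((s+r')(s'+r')) ds' dr'`. -/
theorem integral_equation_solution :
    ∀ s : ℝ, 0 < s → ∀ r : ℝ, 1 ≤ r →
      -Complex.I / (2 * (Real.sqrt 2 : ℂ) * ((s : ℂ) + (r : ℂ)))
        = -Complex.I / (2 * (Real.sqrt 2 : ℂ) * ((s : ℂ) + 1))
          - ∫ r' in Set.Ioc (1 : ℝ) r, ∫ s' in Set.Ioi s,
              (-Complex.I / (2 * (Real.sqrt 2 : ℂ) * ((s' : ℂ) + (r' : ℂ))))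
                / (((s : ℂ) + (r' : ℂ)) * ((s' : ℂ) + (r' : ℂ))) := by
  intro s hs r hr
  set C : ℂ := -Complex.I / (2 * (Real.sqrt 2 : ℂ)) with hC
  -- compute inner integral for r' ∈ Ioc 1 r
  have hinner : ∀ r' ∈ Set.Ioc (1:ℝ) r,
      (∫ s' in Set.Ioi s,
        (-Complex.I / (2 * (Real.sqrt 2 : ℂ) * ((s' : ℂ) + (r' : ℂ))))
          / (((s : ℂ) + (r' : ℂ)) * ((s' : ℂ) + (r' : ℂ))))
        = C * ((((s + r') ^ 2)⁻¹ : ℝ) : ℂ) := by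
    intro r' hr'
    have h1 : (0:ℝ) < s + r' := by nlinarith [hr'.1]
    have heq : ∀ s' : ℝ,
        (-Complex.I / (2 * (Real.sqrt 2 : ℂ) * ((s' : ℂ) + (r' : ℂ))))
          / (((s : ℂ) + (r' : ℂ)) * ((s' : ℂ) + (r' : ℂ)))
        = (C * (((s:ℂ) + (r':ℂ))⁻¹)) * (((((s' + r') ^ 2)⁻¹ : ℝ)) : ℂ) := by
      intro s'
      push_cast
      rw [div_aux]
    simp only [heq]
    rw [MeasureTheory.integral_const_mul _ _]
    have hint : (∫ a in Set.Ioi s, ((((a + r') ^ 2)⁻¹ : ℝ) : ℂ)) = (((s + r')⁻¹ : ℝ) : ℂ) :=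
      integral_ofReal.trans (congrArg _ (inner_real_aux s r' h1))
    rw [hint]
    have h2 : ((s:ℂ) + (r':ℂ)) ≠ 0 := by
      have : ((s + r' : ℝ) : ℂ) ≠ 0 := Complex.ofReal_ne_zero.mpr h1.ne'
      push_cast at this; exact this
    push_cast
    rw [sq]
    field_simp
  rw [MeasureTheory.setIntegral_congr_fun measurableSet_Ioc hinner]
  rw [MeasureTheory.integral_const_mul _ _]
  have hout : (∫ x in Set.Ioc (1:ℝ) r, ((((s + x) ^ 2)⁻¹ : ℝ) : ℂ))
      = ((((s + 1)⁻¹ - (s + r)⁻¹ : ℝ)) : ℂ) :=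
    integral_ofReal.trans (congrArg _ (outer_real_aux s r hs hr))
  rw [hout]
  have h1 : ((s:ℂ) + 1) ≠ 0 := by
    have : ((s + 1 : ℝ) : ℂ) ≠ 0 := Complex.ofReal_ne_zero.mpr (by nlinarith)
    push_cast at this; exact this
  have h2 : ((s:ℂ) + (r:ℂ)) ≠ 0 := by
    have : ((s + r : ℝ) : ℂ) ≠ 0 := Complex.ofReal_ne_zero.mpr (by nlinarith)
    push_cast at this; exact this
  have h3 : ((Real.sqrt 2 : ℝ) : ℂ) ≠ 0 :=
    Complex.ofReal_ne_zero.mpr (by positivity)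
  have hsr1 : s + 1 ≠ 0 := by nlinarith
  have hsr2 : s + r ≠ 0 := by nlinarith
  rw [hC]
  push_cast
  field_simp
  ring
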